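/- arXiv:0709.3595 — 2 statements merged into one kernel-verified Lean document; each statement's English description precedes it below -/
import Mathlib

section
/- Let h : [0,∞) → [0,∞) be a gauge function (vanishing at 0, continuous and nondecreasing near 0, with h(r)/r positive and nonincreasing near 0) and τ > 2. If ∑_{q=1}^∞ h(q^{-τ}) · q < ∞, then the set J_τ of τ-approximable real numbers has Hausdorff h-measure zero. -/
open Filter MeasureTheory Set ENNReal Topology

/-- If `h` is a gauge function, `τ > 2` and `∑_q h(q^{-τ}) q < ∞`, then `J_τ` has
Hausdorff `h`-measure zero. -/
theorem stmt3 (τ : ℝ) (hτ : 2 < τ) (h : ℝ → ℝ) (hh0 : h 0 = 0)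
    (hgauge : ∃ ε > 0, ContinuousOn h (Set.Icc 0 ε) ∧ MonotoneOn h (Set.Icc 0 ε) ∧
      (∀ r ∈ Set.Ioc 0 ε, 0 < h r / r) ∧ AntitoneOn (fun r => h r / r) (Set.Ioc 0 ε))
    (hsum : Summable fun q : ℕ => h ((q : ℝ) ^ (-τ)) * q) :
    MeasureTheory.Measure.mkMetric (fun r => ENNReal.ofReal (h r.toReal))
      {x : ℝ |
        {pq : ℤ × ℕ | 0 < pq.2 ∧ |x - (pq.1 : ℝ) / pq.2| < (pq.2 : ℝ) ^ (-τ)}.Infinite} = 0 := by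
  obtain ⟨ε, hε, _hcont, hmono, hpos, hanti⟩ := hgauge
  set m : ℝ≥0∞ → ℝ≥0∞ := fun r => ENNReal.ofReal (h r.toReal) with hm
  set J := {x : ℝ |
      {pq : ℤ × ℕ | 0 < pq.2 ∧ |x - (pq.1 : ℝ) / pq.2| < (pq.2 : ℝ) ^ (-τ)}.Infinite} with hJ
  have hτ0 : (0:ℝ) < τ := by linarith
  -- Step A: from infinitude, extract approximations with arbitrarily large q
  have hlarge : ∀ x : ℝ, x ∈ J → ∀ n : ℕ,
      ∃ p : ℤ, ∃ q : ℕ, max n 1 ≤ q ∧ |x - (p:ℝ)/q| < (q:ℝ)^(-τ) := by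
    intro x hx n
    by_contra hcon
    push_neg at hcon
    set M : ℕ := ⌈(|x|+1) * (max n 1 : ℕ)⌉₊ with hM
    apply hx
    apply Set.Finite.subset (Finset.finite_toSet
      ((Finset.Icc (-(M:ℤ)) (M:ℤ)) ×ˢ Finset.range (max n 1)))
    rintro ⟨p, q⟩ ⟨hq0, happ⟩
    have hqlt : q < max n 1 := by
      by_contra hge
      exact absurd happ (not_lt.mpr (hcon p q (not_lt.mp hge)))
    have hq1 : (1:ℝ) ≤ q := by exact_mod_cast hq0
    have hqR : (0:ℝ) < q := by linarith
    have hr1 : (q:ℝ)^(-τ) ≤ 1 := Real.rpow_le_one_of_one_le_of_nonpos hq1 (by linarith)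
    have habs : |(p:ℝ)/q| ≤ |x| + 1 := by
      have h1 := abs_sub_abs_le_abs_sub ((p:ℝ)/q) x
      rw [abs_sub_comm] at h1
      linarith
    have hpabs : |(p:ℝ)| ≤ (|x|+1) * q := by
      rw [abs_div, abs_of_pos hqR, div_le_iff₀ hqR] at habs
      linarith
    have hqle : (q:ℝ) ≤ (max n 1 : ℕ) := by exact_mod_cast hqlt.le
    have hpabs2 : (|p| : ℝ) ≤ (M:ℝ) := by
      push_cast
      calc (|p| : ℝ) = |(p:ℝ)| := by push_cast; ring
        _ ≤ (|x|+1) * q := hpabs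
        _ ≤ (|x|+1) * (max n 1 : ℕ) := by nlinarith [abs_nonneg x]
        _ ≤ (M:ℝ) := Nat.le_ceil _
    have hpM : |p| ≤ (M:ℤ) := by exact_mod_cast hpabs2
    simp only [Finset.coe_product, Set.mem_prod, Finset.mem_coe, Finset.mem_Icc,
      Finset.mem_range]
    exact ⟨abs_le.mp hpM, hqlt⟩
  -- diameter bound for balls
  have hdiam : ∀ (c R : ℝ), 0 ≤ R →
      EMetric.diam (Metric.ball c R) ≤ ENNReal.ofReal (2*R) := by
    intro c R hR
    refine EMetric.diam_le fun x hx y hy => ?_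
    rw [edist_dist]
    refine ENNReal.ofReal_le_ofReal ?_
    have hx' := Metric.mem_ball.mp hx
    have hy' := Metric.mem_ball.mp hy
    have := dist_triangle x c y
    rw [dist_comm c y] at this
    linarith
  have hrpow_tendsto : Tendsto (fun q : ℕ => (q:ℝ)^(-τ)) atTop (𝓝 0) :=
    (tendsto_rpow_neg_atTop hτ0).comp tendsto_natCast_atTop_atTop
  -- choose Q₁ with 2 q^{-τ} ≤ ε for q ≥ Q₁
  obtain ⟨Q₁, hQ₁⟩ : ∃ Q₁ : ℕ, ∀ q ≥ Q₁, 2*(q:ℝ)^(-τ) ≤ ε := by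
    have h2 : Tendsto (fun q : ℕ => 2*(q:ℝ)^(-τ)) atTop (𝓝 0) := by
      simpa using hrpow_tendsto.const_mul 2
    have := h2.eventually_lt_const hε
    rw [eventually_atTop] at this
    obtain ⟨Q₁, hQ⟩ := this
    exact ⟨Q₁, fun q hq => (hQ q hq).le⟩
  -- Step B: each truncated piece has measure zero
  have key : ∀ N : ℕ, Measure.mkMetric m (J ∩ Icc (-(N:ℝ)) N) = 0 := by
    intro N
    set t : ∀ n : ℕ, (Σ q : {q : ℕ // n ≤ q}, Fin (2*(N+1)*q + 1)) → Set ℝ :=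
      fun n i => Metric.ball (((i.2.val : ℝ) - (N+1)*(i.1.val : ℕ)) / (i.1.val : ℕ))
        (((i.1.val : ℕ):ℝ)^(-τ)) with ht_def
    set r : ℕ → ℝ≥0∞ := fun n => ENNReal.ofReal (2 * (n:ℝ)^(-τ)) with hr_def
    have hr : Tendsto r atTop (𝓝 0) := by
      have := (ENNReal.continuous_ofReal.tendsto 0).comp
        (by simpa using hrpow_tendsto.const_mul 2 :
          Tendsto (fun q : ℕ => 2*(q:ℝ)^(-τ)) atTop (𝓝 0))
      rw [ENNReal.ofReal_zero] at this
      exact this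
    have ht : ∀ᶠ n in atTop, ∀ i, EMetric.diam (t n i) ≤ r n := by
      filter_upwards [eventually_ge_atTop 1] with n hn
      rintro ⟨⟨q, hq⟩, j⟩
      refine le_trans (hdiam _ _ (Real.rpow_nonneg (Nat.cast_nonneg q) _)) ?_
      refine ENNReal.ofReal_le_ofReal ?_
      have h1 : (0:ℝ) < n := by exact_mod_cast hn
      have h2 : (n:ℝ) ≤ q := by exact_mod_cast hq
      nlinarith [Real.rpow_le_rpow_of_nonpos h1 h2 (by linarith : -τ ≤ 0)]
    have hst : ∀ᶠ n in atTop, (J ∩ Icc (-(N:ℝ)) N) ⊆ ⋃ i, t n i := by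
      refine Eventually.of_forall fun n => ?_
      rintro x ⟨hxJ, hxI⟩
      obtain ⟨p, q, hq, happ⟩ := hlarge x hxJ n
      have hq1 : 1 ≤ q := le_trans (le_max_right n 1) hq
      have hqn : n ≤ q := le_trans (le_max_left n 1) hq
      have hqR : (0:ℝ) < q := by exact_mod_cast hq1
      have hr1 : (q:ℝ)^(-τ) ≤ 1 :=
        Real.rpow_le_one_of_one_le_of_nonpos (by exact_mod_cast hq1) (by linarith)
      have hxN : |x| ≤ N := abs_le.mpr ⟨hxI.1, hxI.2⟩
      have hpabs : |(p:ℝ)| ≤ ((N:ℝ)+1) * q := by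
        have h1 := abs_sub_abs_le_abs_sub ((p:ℝ)/q) x
        rw [abs_sub_comm] at h1
        have habs : |(p:ℝ)/q| ≤ (N:ℝ) + 1 := by linarith
        rw [abs_div, abs_of_pos hqR, div_le_iff₀ hqR] at habs
        linarith
      have hpZ : |p| ≤ ((N:ℤ)+1) * q := by exact_mod_cast (by push_cast; exact hpabs :
        |(p:ℝ)| ≤ (((N:ℤ)+1) * (q:ℤ) : ℤ))
      have hpZ' := abs_le.mp hpZ
      have hjnn : 0 ≤ p + ((N:ℤ)+1)*q := by linarith [hpZ'.1]
      have h2K : ((2*(N+1)*q : ℕ) : ℤ) = 2*(((N:ℤ)+1)*(q:ℤ)) := by push_cast; ring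
      have hle : ((p + ((N:ℤ)+1)*q).toNat : ℤ) ≤ ((2*(N+1)*q : ℕ) : ℤ) := by
        rw [Int.toNat_of_nonneg hjnn, h2K]; linarith [hpZ'.2]
      have hjlt : (p + ((N:ℤ)+1)*q).toNat < 2*(N+1)*q + 1 :=
        Nat.lt_succ_of_le (by exact_mod_cast hle)
      refine Set.mem_iUnion.mpr ⟨⟨⟨q, hqn⟩, ⟨(p + ((N:ℤ)+1)*q).toNat, hjlt⟩⟩, ?_⟩
      simp only [ht_def, Metric.mem_ball]
      have hcast : (((p + ((N:ℤ)+1)*q).toNat : ℕ) : ℝ) = (p:ℝ) + ((N:ℝ)+1)*q := by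
        calc (((p + ((N:ℤ)+1)*q).toNat : ℕ) : ℝ)
            = (((p + ((N:ℤ)+1)*q).toNat : ℤ) : ℝ) := by norm_cast
          _ = ((p + ((N:ℤ)+1)*q : ℤ) : ℝ) := by rw [Int.toNat_of_nonneg hjnn]
          _ = (p:ℝ) + ((N:ℝ)+1)*q := by push_cast; ring
      rw [Real.dist_eq]
      have hcenter : (((p + ((N:ℤ)+1)*q).toNat : ℕ) : ℝ) - ((N:ℝ)+1)*q = (p:ℝ) := by
        rw [hcast]; ring
      calc |x - ((((p + ((N:ℤ)+1)*q).toNat : ℕ):ℝ) - ((N:ℝ)+1)*(q:ℕ)) / (q:ℕ)|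
          = |x - (p:ℝ)/q| := by rw [hcenter]
        _ < (q:ℝ)^(-τ) := happ
    have hbound := Measure.mkMetric_le_liminf_tsum (J ∩ Icc (-(N:ℝ)) N) r hr t ht hst m
    -- the dominating summable series
    set C : ℝ := (2*((N:ℝ)+1)+1)*2 with hC
    have hC0 : 0 ≤ C := by positivity
    set g : ℕ → ℝ≥0∞ := fun q => ENNReal.ofReal (C * (h ((q:ℝ)^(-τ)) * q)) with hg
    have hgfin : ∑' q, g q ≠ ∞ := by
      have hle : ∀ q : ℕ, g q ≤ ENNReal.ofReal C * ENNReal.ofReal (|h ((q:ℝ)^(-τ)) * q|) := by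
        intro q
        simp only [hg]
        rw [ENNReal.ofReal_mul hC0]
        exact mul_le_mul_right (ENNReal.ofReal_le_ofReal (le_abs_self _)) _
      have : ∑' q, g q ≤ ENNReal.ofReal C * ENNReal.ofReal (∑' q : ℕ, |h ((q:ℝ)^(-τ)) * (q:ℝ)|) := by
        rw [ENNReal.ofReal_tsum_of_nonneg (fun q => abs_nonneg _) hsum.abs,
          ← ENNReal.tsum_mul_left]
        exact ENNReal.tsum_le_tsum hle
      exact ne_top_of_le_ne_top (ENNReal.mul_ne_top ENNReal.ofReal_ne_top
        ENNReal.ofReal_ne_top) this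
    have hTail : Tendsto (fun n => ∑' k, g (k+n)) atTop (𝓝 0) :=
      ENNReal.tendsto_sum_nat_add g hgfin
    have hSle : ∀ᶠ n in atTop,
        (∑' i, m (EMetric.diam (t n i))) ≤ ∑' k, g (k+n) := by
      filter_upwards [eventually_ge_atTop (max Q₁ 1)] with n hn
      have hterm : ∀ i : (Σ q : {q : ℕ // n ≤ q}, Fin (2*(N+1)*q + 1)),
          m (EMetric.diam (t n i)) ≤ ENNReal.ofReal (h (2*((i.1.val : ℕ):ℝ)^(-τ))) := by
        rintro ⟨⟨q, hq⟩, j⟩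
        have hqQ : Q₁ ≤ q := le_trans (le_trans (le_max_left Q₁ 1) hn) hq
        have hεq : 2*(q:ℝ)^(-τ) ≤ ε := hQ₁ q hqQ
        have hd := hdiam (((j.val : ℝ) - ((N:ℝ)+1)*(q:ℕ)) / (q:ℕ)) ((q:ℝ)^(-τ))
          (Real.rpow_nonneg (Nat.cast_nonneg q) _)
        have htr : (EMetric.diam (t n ⟨⟨q, hq⟩, j⟩)).toReal ≤ 2*(q:ℝ)^(-τ) :=
          ENNReal.toReal_le_of_le_ofReal
            (by positivity) hd
        refine ENNReal.ofReal_le_ofReal ?_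
        exact hmono ⟨ENNReal.toReal_nonneg, htr.trans hεq⟩
          ⟨by positivity, hεq⟩ htr
      calc (∑' i, m (EMetric.diam (t n i)))
          ≤ ∑' i : (Σ q : {q : ℕ // n ≤ q}, Fin (2*(N+1)*q + 1)),
              ENNReal.ofReal (h (2*((i.1.val : ℕ):ℝ)^(-τ))) := ENNReal.tsum_le_tsum hterm
        _ = ∑' q : {q : ℕ // n ≤ q}, ∑' _j : Fin (2*(N+1)*q + 1),
              ENNReal.ofReal (h (2*((q.val : ℕ):ℝ)^(-τ))) := ENNReal.tsum_sigma' _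
        _ = ∑' q : {q : ℕ // n ≤ q}, ((2*(N+1)*q.val + 1 : ℕ) : ℝ≥0∞) *
              ENNReal.ofReal (h (2*((q.val : ℕ):ℝ)^(-τ))) := by
            congr 1; funext q
            simp [tsum_fintype, Finset.sum_const, nsmul_eq_mul]
        _ ≤ ∑' q : {q : ℕ // n ≤ q}, g q.val := by
            refine ENNReal.tsum_le_tsum fun ⟨q, hq⟩ => ?_
            have hq1 : 1 ≤ q := le_trans (le_trans (le_max_right Q₁ 1) hn) hq
            have hqQ : Q₁ ≤ q := le_trans (le_trans (le_max_left Q₁ 1) hn) hq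
            have hqR : (1:ℝ) ≤ q := by exact_mod_cast hq1
            have hεq : 2*(q:ℝ)^(-τ) ≤ ε := hQ₁ q hqQ
            set a : ℝ := (q:ℝ)^(-τ) with ha_def
            have ha0 : 0 < a := Real.rpow_pos_of_pos (by linarith) _
            have haI : a ∈ Set.Ioc 0 ε := ⟨ha0, by linarith⟩
            have hbI : 2*a ∈ Set.Ioc 0 ε := ⟨by linarith, hεq⟩
            have hdub : h (2*a) ≤ 2 * h a := by
              have hd := hanti haI hbI (by linarith)
              calc h (2*a) = (h (2*a)/(2*a))*(2*a) := (div_mul_cancel₀ _ (by positivity)).symm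
                _ ≤ (h a / a)*(2*a) := mul_le_mul_of_nonneg_right hd (by positivity)
                _ = 2 * h a := by field_simp
            have hha : 0 < h a := by
              have h1 := mul_pos (hpos a haI) ha0
              rwa [div_mul_cancel₀ _ (ne_of_gt ha0)] at h1
            simp only [hg]
            rw [← ENNReal.ofReal_natCast, ← ENNReal.ofReal_mul (by positivity)]
            refine ENNReal.ofReal_le_ofReal ?_
            have hcount : ((2*(N+1)*q + 1 : ℕ) : ℝ) ≤ (2*((N:ℝ)+1)+1) * q := by
              push_cast; nlinarith
            calc ((2*(N+1)*q + 1 : ℕ) : ℝ) * h (2*a)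
                ≤ ((2*(N+1)*q + 1 : ℕ) : ℝ) * (2 * h a) :=
                  mul_le_mul_of_nonneg_left hdub (by positivity)
              _ ≤ ((2*((N:ℝ)+1)+1) * q) * (2 * h a) :=
                  mul_le_mul_of_nonneg_right hcount (by positivity)
              _ = C * (h a * q) := by rw [hC]; ring
        _ = ∑' k, g (k+n) :=
              (Equiv.tsum_eq
                (⟨fun k => ⟨k + n, Nat.le_add_left n k⟩, fun q => q.val - n,
                  fun k => by simp, fun q => by ext; simp [Nat.sub_add_cancel q.2]⟩ :
                  ℕ ≃ {q : ℕ // n ≤ q})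
                (fun q : {q : ℕ // n ≤ q} => g q.val)).symm
    have hliminf : liminf (fun n => ∑' i, m (EMetric.diam (t n i))) atTop = 0 := by
      refine le_antisymm ?_ zero_le
      calc liminf (fun n => ∑' i, m (EMetric.diam (t n i))) atTop
          ≤ liminf (fun n => ∑' k, g (k+n)) atTop := liminf_le_liminf hSle
        _ = 0 := hTail.liminf_eq
    exact le_antisymm (hbound.trans hliminf.le) zero_le
  -- Step C: countable union
  have hcover : J ⊆ ⋃ N : ℕ, (J ∩ Icc (-(N:ℝ)) (N:ℝ)) := by
    intro x hx
    refine Set.mem_iUnion.mpr ⟨⌈|x|⌉₊, hx, ?_⟩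
    have h1 := Nat.le_ceil |x|
    have h2 := abs_le.mp (le_refl |x|)
    constructor
    · have := neg_abs_le x; linarith
    · have := le_abs_self x; linarith
  exact measure_mono_null hcover (measure_iUnion_null key)
end

section
/- Let β ∈ (0,d] and φ ∈ Φ. For h = h_{β,φ}(r) = r^{β-φ(r)}, there is η > 0 such that for all r_1, r_2 ∈ (0,η) with r_1 ≤ r_2, limsup_{κ → 0} h(κ r_1)/h(κ r_2) ≤ h(r_1)/h(r_2). -/
open Set Filter

/-- `h ∈ 𝔇_d`: gauge function. -/
def IsGauge (d : ℕ) (h : ℝ → ℝ) : Prop :=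
  h 0 = 0 ∧ ∃ ε > 0, ContinuousOn h (Icc 0 ε) ∧ MonotoneOn h (Icc 0 ε) ∧
    (∀ r ∈ Ioc 0 ε, 0 < h r / r ^ d) ∧ AntitoneOn (fun r => h r / r ^ d) (Ioc 0 ε)

/-- `φ ∈ Φ`: continuous, nondecreasing, vanishing at `0` near the origin,
`r^{-φ(r)}` monotonically tends to `∞` at `0`, and for every `ε > 0` the function
`r ↦ r^{ε - φ(r)}` tends to `0` at `0` and increases near `0`. -/
def IsPhi (φ : ℝ → ℝ) : Prop :=
  (∃ ρ > 0, ContinuousOn φ (Icc 0 ρ) ∧ MonotoneOn φ (Icc 0 ρ)) ∧ φ 0 = 0 ∧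
  Tendsto (fun r => r ^ (-φ r)) (nhdsWithin 0 (Ioi 0)) atTop ∧
  (∃ ρ > 0, AntitoneOn (fun r => r ^ (-φ r)) (Ioc 0 ρ)) ∧
  ∀ ε > 0, Tendsto (fun r => r ^ (ε - φ r)) (nhdsWithin 0 (Ioi 0)) (nhds 0) ∧
    ∃ ρε > 0, StrictMonoOn (fun r => r ^ (ε - φ r)) (Ioc 0 ρε)

/-- Inequality (10): for `h = h_{β,φ}`, there is `η > 0` such that for
`0 < r₁ ≤ r₂ < η`, `limsup_{κ→0⁺} h(κr₁)/h(κr₂) ≤ h(r₁)/h(r₂)`. -/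
theorem stmt16 (d : ℕ) (hd : 0 < d) (β : ℝ) (hβ : β ∈ Set.Ioc 0 (d : ℝ))
    (φ : ℝ → ℝ) (hφ : IsPhi φ) :
    ∃ η > 0, ∀ r1 r2 : ℝ, 0 < r1 → r1 ≤ r2 → r2 < η →
      Filter.limsup
        (fun κ => (κ * r1) ^ (β - φ (κ * r1)) / (κ * r2) ^ (β - φ (κ * r2)))
        (nhdsWithin 0 (Set.Ioi 0)) ≤ r1 ^ (β - φ r1) / r2 ^ (β - φ r2) := by
  obtain ⟨⟨ρ1, hρ1, hcont, hmono⟩, hφ0, _, ⟨ρ2, hρ2, hanti⟩, _⟩ := hφ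
  refine ⟨min ρ1 ρ2, lt_min hρ1 hρ2, fun r1 r2 hr1 h12 hr2η => ?_⟩
  have hr2 : 0 < r2 := lt_of_lt_of_le hr1 h12
  set F := nhdsWithin (0:ℝ) (Ioi 0) with hF
  set g : ℝ → ℝ := fun κ => r1 ^ (β - φ (κ * r1)) / r2 ^ (β - φ (κ * r2)) with hg
  -- the limit of g
  have hφ1 : Tendsto (fun κ => φ (κ * r1)) F (nhds 0) := by
    have hc : Tendsto φ (nhdsWithin 0 (Icc 0 ρ1)) (nhds 0) := by
      have := (hcont 0 ⟨le_refl 0, hρ1.le⟩)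
      simpa [hφ0, ContinuousWithinAt] using this
    refine hc.comp ?_
    rw [tendsto_nhdsWithin_iff]
    constructor
    · have : Tendsto (fun κ : ℝ => κ * r1) (nhds 0) (nhds 0) := by
        simpa using (tendsto_id (α := ℝ) (x := nhds 0)).mul_const r1
      exact this.mono_left nhdsWithin_le_nhds
    · filter_upwards [Ioo_mem_nhdsGT_of_mem
        (show (0:ℝ) ∈ Ico 0 (ρ1 / r1) from ⟨le_refl _, div_pos hρ1 hr1⟩)] with κ hκ
      exact ⟨mul_nonneg hκ.1.le hr1.le,
        le_of_lt (by rw [← lt_div_iff₀ hr1] at *; exact hκ.2)⟩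
  have hφ2 : Tendsto (fun κ => φ (κ * r2)) F (nhds 0) := by
    have hc : Tendsto φ (nhdsWithin 0 (Icc 0 ρ1)) (nhds 0) := by
      have := (hcont 0 ⟨le_refl 0, hρ1.le⟩)
      simpa [hφ0, ContinuousWithinAt] using this
    refine hc.comp ?_
    rw [tendsto_nhdsWithin_iff]
    constructor
    · have : Tendsto (fun κ : ℝ => κ * r2) (nhds 0) (nhds 0) := by
        simpa using (tendsto_id (α := ℝ) (x := nhds 0)).mul_const r2
      exact this.mono_left nhdsWithin_le_nhds
    · filter_upwards [Ioo_mem_nhdsGT_of_mem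
        (show (0:ℝ) ∈ Ico 0 (ρ1 / r2) from ⟨le_refl _, div_pos hρ1 hr2⟩)] with κ hκ
      exact ⟨mul_nonneg hκ.1.le hr2.le,
        le_of_lt (by rw [← lt_div_iff₀ hr2] at *; exact hκ.2)⟩
  have hglim : Tendsto g F (nhds (r1 ^ β / r2 ^ β)) := by
    have h1 : Tendsto (fun κ => r1 ^ (β - φ (κ * r1))) F (nhds (r1 ^ β)) := by
      have hcr : Tendsto (fun y : ℝ => r1 ^ y) (nhds β) (nhds (r1 ^ β)) :=
        (Real.continuousAt_const_rpow hr1.ne').tendsto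
      have : Tendsto (fun κ => β - φ (κ * r1)) F (nhds β) := by
        simpa using (tendsto_const_nhds (x := β) (f := F)).sub hφ1
      exact hcr.comp this
    have h2 : Tendsto (fun κ => r2 ^ (β - φ (κ * r2))) F (nhds (r2 ^ β)) := by
      have hcr : Tendsto (fun y : ℝ => r2 ^ y) (nhds β) (nhds (r2 ^ β)) :=
        (Real.continuousAt_const_rpow hr2.ne').tendsto
      have : Tendsto (fun κ => β - φ (κ * r2)) F (nhds β) := by
        simpa using (tendsto_const_nhds (x := β) (f := F)).sub hφ2
      exact hcr.comp this
    exact h1.div h2 (ne_of_gt (Real.rpow_pos_of_pos hr2 β))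
  -- eventual bound of f by g
  have hfg : ∀ᶠ κ in F,
      (κ * r1) ^ (β - φ (κ * r1)) / (κ * r2) ^ (β - φ (κ * r2)) ≤ g κ := by
    filter_upwards [Ioo_mem_nhdsGT_of_mem
      (show (0:ℝ) ∈ Ico 0 (min 1 (ρ1 / r2)) from
        ⟨le_refl _, lt_min one_pos (div_pos hρ1 hr2)⟩)] with κ hκ
    have hκ0 : 0 < κ := hκ.1
    have hκ1 : κ ≤ 1 := le_of_lt (lt_of_lt_of_le hκ.2 (min_le_left _ _))
    have hκρ : κ * r2 ≤ ρ1 := by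
      have := lt_of_lt_of_le hκ.2 (min_le_right _ _)
      exact le_of_lt ((lt_div_iff₀ hr2).mp this)
    have hm1 : κ * r1 ∈ Icc (0:ℝ) ρ1 :=
      ⟨mul_nonneg hκ0.le hr1.le,
        le_trans (by nlinarith) hκρ⟩
    have hm2 : κ * r2 ∈ Icc (0:ℝ) ρ1 := ⟨mul_nonneg hκ0.le hr2.le, hκρ⟩
    have hφle : φ (κ * r1) ≤ φ (κ * r2) :=
      hmono hm1 hm2 (by nlinarith)
    have he : β - φ (κ * r2) ≤ β - φ (κ * r1) := by linarith
    have hκe : κ ^ (β - φ (κ * r1)) ≤ κ ^ (β - φ (κ * r2)) :=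
      Real.rpow_le_rpow_of_exponent_ge hκ0 hκ1 he
    have hrw1 : (κ * r1) ^ (β - φ (κ * r1))
        = κ ^ (β - φ (κ * r1)) * r1 ^ (β - φ (κ * r1)) :=
      Real.mul_rpow hκ0.le hr1.le
    have hrw2 : (κ * r2) ^ (β - φ (κ * r2))
        = κ ^ (β - φ (κ * r2)) * r2 ^ (β - φ (κ * r2)) :=
      Real.mul_rpow hκ0.le hr2.le
    rw [hrw1, hrw2]
    have hp2 : (0:ℝ) < κ ^ (β - φ (κ * r2)) * r2 ^ (β - φ (κ * r2)) :=
      mul_pos (Real.rpow_pos_of_pos hκ0 _) (Real.rpow_pos_of_pos hr2 _)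
    have hnum : κ ^ (β - φ (κ * r1)) * r1 ^ (β - φ (κ * r1))
        ≤ κ ^ (β - φ (κ * r2)) * r1 ^ (β - φ (κ * r1)) :=
      mul_le_mul_of_nonneg_right hκe (Real.rpow_nonneg hr1.le _)
    calc κ ^ (β - φ (κ * r1)) * r1 ^ (β - φ (κ * r1)) /
          (κ ^ (β - φ (κ * r2)) * r2 ^ (β - φ (κ * r2)))
        ≤ κ ^ (β - φ (κ * r2)) * r1 ^ (β - φ (κ * r1)) /
          (κ ^ (β - φ (κ * r2)) * r2 ^ (β - φ (κ * r2))) :=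
          div_le_div_of_nonneg_right hnum hp2.le |>.trans_eq rfl
      _ = g κ := by
          rw [mul_div_mul_left _ _ (ne_of_gt (Real.rpow_pos_of_pos hκ0 _))]
  -- limsup f ≤ limsup g = lim g
  have hNeBot : F.NeBot := by
    rw [hF]; infer_instance
  have hgBdd : IsBoundedUnder (· ≤ ·) F g := hglim.isBoundedUnder_le
  have hfCobdd : IsCoboundedUnder (· ≤ ·) F
      (fun κ => (κ * r1) ^ (β - φ (κ * r1)) / (κ * r2) ^ (β - φ (κ * r2))) := by
    apply IsBoundedUnder.isCoboundedUnder_le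
    refine ⟨0, ?_⟩
    simp only [eventually_map]
    filter_upwards [self_mem_nhdsWithin] with κ (hκ : (0:ℝ) < κ)
    exact div_nonneg (Real.rpow_nonneg (mul_nonneg hκ.le hr1.le) _)
      (Real.rpow_nonneg (mul_nonneg hκ.le hr2.le) _)
  have hlim1 : limsup
      (fun κ => (κ * r1) ^ (β - φ (κ * r1)) / (κ * r2) ^ (β - φ (κ * r2))) F
      ≤ limsup g F := limsup_le_limsup hfg hfCobdd hgBdd
  have hlim2 : limsup g F = r1 ^ β / r2 ^ β := hglim.limsup_eq
  -- final comparison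
  have hfin : r1 ^ β / r2 ^ β ≤ r1 ^ (β - φ r1) / r2 ^ (β - φ r2) := by
    have hr1m : r1 ∈ Ioc (0:ℝ) ρ2 :=
      ⟨hr1, le_of_lt (lt_of_le_of_lt h12 (lt_of_lt_of_le hr2η (min_le_right _ _)))⟩
    have hr2m : r2 ∈ Ioc (0:ℝ) ρ2 :=
      ⟨hr2, le_of_lt (lt_of_lt_of_le hr2η (min_le_right _ _))⟩
    have hA : r2 ^ (-φ r2) ≤ r1 ^ (-φ r1) := hanti hr1m hr2m h12
    have e1 : r1 ^ (β - φ r1) = r1 ^ β * r1 ^ (-φ r1) := by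
      rw [← Real.rpow_add hr1]; ring_nf
    have e2 : r2 ^ (β - φ r2) = r2 ^ β * r2 ^ (-φ r2) := by
      rw [← Real.rpow_add hr2]; ring_nf
    rw [e1, e2]
    have hd2 : (0:ℝ) < r2 ^ β * r2 ^ (-φ r2) :=
      mul_pos (Real.rpow_pos_of_pos hr2 _) (Real.rpow_pos_of_pos hr2 _)
    calc r1 ^ β / r2 ^ β
        = (r1 ^ β * r2 ^ (-φ r2)) / (r2 ^ β * r2 ^ (-φ r2)) := by
          rw [mul_div_mul_right _ _ (ne_of_gt (Real.rpow_pos_of_pos hr2 (-φ r2)))]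
      _ ≤ (r1 ^ β * r1 ^ (-φ r1)) / (r2 ^ β * r2 ^ (-φ r2)) :=
          div_le_div_of_nonneg_right
            (mul_le_mul_of_nonneg_left hA (Real.rpow_nonneg hr1.le _)) hd2.le
  refine le_trans ?_ hfin
  rw [← hlim2]
  exact hlim1
end
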